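/- For all x in the interval (5π/8, π), the inequality (820/33)(1 − cos(x/10)) ≤ 1 − cos(x) + (1/2)cos(2x) holds. -/

import Mathlib

open Real

theorem lemma7_n2 : ∀ x ∈ Set.Ioo (5 * π / 8) π,
    (820/33) * (1 - cos (x/10)) ≤ 1 - cos x + (1/2) * cos (2*x) := by
  intro x hx
  obtain ⟨h1, h2⟩ := hx
  have hπl : (3.141592 : ℝ) < π := pi_gt_d6
  have hπu : π < 3.15 := pi_lt_d2
  have hx0 : 0 < x := by nlinarith
  -- LHS bound: 1 - cos(x/10) ≤ (x/10)^2/2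
  have hL : 1 - cos (x/10) ≤ (x/10)^2 / 2 := by
    have hs : sin (x/20) ≤ x/20 := Real.sin_le (by nlinarith)
    have hs0 : 0 ≤ sin (x/20) :=
      Real.sin_nonneg_of_nonneg_of_le_pi (by nlinarith) (by nlinarith)
    have hc : cos (x/10) = 1 - 2 * sin (x/20)^2 := by
      have h := Real.cos_two_mul (x/20)
      have h2 : sin (x/20)^2 + cos (x/20)^2 = 1 := Real.sin_sq_add_cos_sq _
      have h3 : 2 * (x/20) = x/10 := by ring
      rw [h3] at h
      linarith
    nlinarith
  -- RHS rewrite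
  have hR : 1 - cos x + (1/2) * cos (2*x) = cos x ^ 2 - cos x + 1/2 := by
    rw [Real.cos_two_mul]; ring
  rw [hR]
  have hcsq : 0 ≤ cos x ^ 2 := sq_nonneg _
  rcases le_or_gt x (3*π/4) with hcase | hcase
  · -- x ≤ 3π/4 : cos x ≤ cos(5π/8) = -sin(π/8)
    have hmono : cos x ≤ cos (5*π/8) :=
      Real.cos_le_cos_of_nonneg_of_le_pi (by positivity) (le_of_lt h2) (le_of_lt h1)
    have h58 : cos (5*π/8) = - sin (π/8) := by
      have : (5*π/8 : ℝ) = π/8 + π/2 := by ring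
      rw [this, Real.cos_add_pi_div_two]
    rw [h58] at hmono
    have hsin : π/8 - (π/8)^3/4 < sin (π/8) :=
      by have h := Real.sin_gt_sub_cube (x := π/8) (by positivity); nlinarith [pow_pos (show (0:ℝ) < π/8 by positivity) 3]
    have hx2 : x^2 ≤ (3*π/4)^2 := by nlinarith
    have hπ2 : π^2 < 9.9225 := by nlinarith
    have hπ3 : π^3 < 31.26 := by nlinarith
    nlinarith
  · -- 3π/4 < x : cos x ≤ cos(3π/4) = -√2/2
    have hmono : cos x ≤ cos (3*π/4) :=
      Real.cos_le_cos_of_nonneg_of_le_pi (by positivity) (le_of_lt h2) (le_of_lt hcase)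
    have h34 : cos (3*π/4) = - (Real.sqrt 2 / 2) := by
      have : (3*π/4 : ℝ) = π - π/4 := by ring
      rw [this, Real.cos_pi_sub, Real.cos_pi_div_four]
    rw [h34] at hmono
    have hs2 : Real.sqrt 2 ^ 2 = 2 := Real.sq_sqrt (by norm_num)
    have hs2' : (1.414 : ℝ) < Real.sqrt 2 := by
      nlinarith [Real.sqrt_nonneg 2]
    nlinarith
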